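/- For every 0 < λ ≤ 1 there is a constant C_λ such that for all real s ≠ 0 and all −∞ < a < b < ∞, |∫_a^b e^{−ist} (t−a)^{λ−1} dt| ≤ C_λ |s|^{−λ}, with C_λ independent of a and b. -/

import Mathlib

open MeasureTheory intervalIntegral Complex Set
open scoped Interval

lemma aux_ii (lam : ℝ) (h0 : 0 < lam) (a b : ℝ) :
    IntervalIntegrable (fun x : ℝ => ((x ^ (lam - 1) : ℝ) : ℂ)) volume a b := by
  rw [intervalIntegrable_iff] at *
  exact (intervalIntegrable_rpow' (by linarith) (a := a) (b := b)).def'.ofReal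

lemma aux_ii_full (lam : ℝ) (h0 : 0 < lam) (s a b : ℝ) :
    IntervalIntegrable
      (fun u : ℝ => Complex.exp (-(Complex.I * s) * u) * ((u ^ (lam - 1) : ℝ) : ℂ)) volume a b := by
  apply (aux_ii lam h0 a b).continuousOn_mul
  exact (Complex.continuous_exp.comp (by continuity)).continuousOn

lemma exp_norm_one (s x : ℝ) : ‖Complex.exp (-(Complex.I * s) * x)‖ = 1 := by
  rw [Complex.norm_exp]
  simp

lemma near_bound (lam : ℝ) (h0 : 0 < lam) (s p : ℝ) (hp : 0 ≤ p) :
    ‖∫ u in (0:ℝ)..p, Complex.exp (-(Complex.I * s) * u) * ((u ^ (lam - 1) : ℝ) : ℂ)‖ ≤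
      p ^ lam / lam := by
  have hle : ‖∫ u in (0:ℝ)..p, Complex.exp (-(Complex.I * s) * u) * ((u ^ (lam - 1) : ℝ) : ℂ)‖ ≤
      |∫ u in (0:ℝ)..p, u ^ (lam - 1)| := by
    apply intervalIntegral.norm_integral_le_abs_of_norm_le
    · apply (ae_restrict_iff' measurableSet_uIoc).2
      apply ae_of_all
      intro t ht
      rw [Set.uIoc_of_le hp] at ht
      rw [norm_mul, exp_norm_one, one_mul, Complex.norm_real, Real.norm_eq_abs,
        _root_.abs_of_nonneg (Real.rpow_nonneg ht.1.le _)]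
    · exact intervalIntegrable_rpow' (by linarith)
  rw [integral_rpow (Or.inl (by linarith))] at hle
  have : lam - 1 + 1 = lam := by ring
  rw [this, Real.zero_rpow h0.ne'] at hle
  calc _ ≤ _ := hle
    _ ≤ p ^ lam / lam := by
        rw [abs_div, sub_zero, _root_.abs_of_nonneg (Real.rpow_nonneg hp _),
          _root_.abs_of_nonneg h0.le]


lemma far_bound (lam : ℝ) (h0 : 0 < lam) (h1 : lam ≤ 1) (s eps T : ℝ) (hs : s ≠ 0)
    (heps : eps = |s|⁻¹) (hT : eps ≤ T) :
    ‖∫ x in eps..T, Complex.exp (-(Complex.I * s) * x) * ((x ^ (lam - 1) : ℝ) : ℂ)‖ ≤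
      3 * eps ^ lam := by
  have hε0 : 0 < eps := by rw [heps]; positivity
  have hc' : (Complex.I * (s:ℂ)) ≠ 0 := by
    simp [Complex.I_ne_zero, hs]
  have hc : (-(Complex.I * (s:ℂ))) ≠ 0 := neg_ne_zero.2 hc'
  set u : ℝ → ℂ := fun x => ((x ^ (lam - 1) : ℝ) : ℂ) with hu_def
  set u' : ℝ → ℂ := fun x => (((lam - 1) * x ^ (lam - 2) : ℝ) : ℂ) with hu'_def
  set v : ℝ → ℂ := fun x => Complex.exp (-(Complex.I * s) * x) * (-(Complex.I * (s:ℂ)))⁻¹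
    with hv_def
  set v' : ℝ → ℂ := fun x => Complex.exp (-(Complex.I * s) * x) with hv'_def
  have hmem : ∀ x ∈ [[eps, T]], 0 < x := by
    intro x hx
    rw [Set.uIcc_of_le hT] at hx
    linarith [hx.1]
  have hu : ∀ x ∈ [[eps, T]], HasDerivAt u (u' x) x := by
    intro x hx
    have hx0 := (hmem x hx).ne'
    have h2 : lam - 2 = lam - 1 - 1 := by ring
    simp only [hu_def, hu'_def, h2]
    exact (Real.hasDerivAt_rpow_const (Or.inl hx0)).ofReal_comp
  have hv : ∀ x ∈ [[eps, T]], HasDerivAt v (v' x) x := by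
    intro x _
    have h1' : HasDerivAt (fun y : ℝ => ((y : ℂ))) 1 x := by
      simpa using (hasDerivAt_id x).ofReal_comp
    have h2 := ((h1'.const_mul (-(Complex.I * (s:ℂ)))).cexp).mul_const
      ((-(Complex.I * (s:ℂ)))⁻¹)
    convert h2 using 1
    case e'_4 => rfl
    simp only [hv'_def, mul_one, mul_assoc, mul_inv_cancel₀ hc]
  have hu'int : IntervalIntegrable u' volume eps T := by
    apply ContinuousOn.intervalIntegrable
    intro x hx
    exact (Complex.continuous_ofReal.continuousAt.comp
      (continuousAt_const.mul
        (Real.continuousAt_rpow_const x _ (Or.inl (hmem x hx).ne')))).continuousWithinAt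
  have hv'int : IntervalIntegrable v' volume eps T :=
    ((Complex.continuous_exp.comp (by continuity)).intervalIntegrable _ _)
  have hibp := intervalIntegral.integral_mul_deriv_eq_deriv_mul hu hv hu'int hv'int
  have hswap : (∫ x in eps..T, Complex.exp (-(Complex.I * s) * x) * ((x ^ (lam - 1) : ℝ) : ℂ))
      = ∫ x in eps..T, u x * v' x := by
    simp only [hu_def, hv'_def]
    congr 1
    ext x
    ring
  rw [hswap, hibp]
  -- norms
  have hvnorm : ∀ x : ℝ, ‖v x‖ = eps := by
    intro x
    rw [hv_def]
    simp only [norm_mul, exp_norm_one, one_mul, norm_inv, norm_neg]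
    simp [heps]
  have hunorm : ∀ x : ℝ, 0 < x → ‖u x‖ = x ^ (lam - 1) := by
    intro x hx
    rw [hu_def]
    simp [Complex.norm_real, Real.norm_eq_abs, _root_.abs_of_nonneg (Real.rpow_nonneg hx.le _)]
  have hanti : T ^ (lam - 1) ≤ eps ^ (lam - 1) :=
    Real.rpow_le_rpow_of_nonpos hε0 hT (by linarith)
  have hepspow : eps ^ (lam - 1) * eps = eps ^ lam := by
    rw [← Real.rpow_add_one hε0.ne' (lam - 1)]
    norm_num
  have hbT : ‖u T * v T‖ ≤ eps ^ lam := by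
    rw [norm_mul, hunorm T (lt_of_lt_of_le hε0 hT), hvnorm, ← hepspow]
    exact mul_le_mul_of_nonneg_right hanti hε0.le
  have hbε : ‖u eps * v eps‖ ≤ eps ^ lam := by
    rw [norm_mul, hunorm eps hε0, hvnorm, hepspow]
  -- integral term
  have hbI : ‖∫ x in eps..T, u' x * v x‖ ≤ eps ^ lam := by
    have hgint : IntervalIntegrable (fun x : ℝ => (1 - lam) * x ^ (lam - 2) * eps)
        volume eps T := by
      apply ContinuousOn.intervalIntegrable
      intro x hx
      exact ((continuousAt_const.mul
        (Real.continuousAt_rpow_const x _ (Or.inl (hmem x hx).ne'))).mul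
        continuousAt_const).continuousWithinAt
    have hle : ‖∫ x in eps..T, u' x * v x‖ ≤
        |∫ x in eps..T, (1 - lam) * x ^ (lam - 2) * eps| := by
      apply intervalIntegral.norm_integral_le_abs_of_norm_le _ hgint
      apply (ae_restrict_iff' measurableSet_uIoc).2
      apply ae_of_all
      intro x hx
      rw [Set.uIoc_of_le hT] at hx
      have hx0 : (0:ℝ) < x := lt_trans hε0 hx.1
      rw [norm_mul, hvnorm, hu'_def]
      simp only [Complex.norm_real, Real.norm_eq_abs, abs_mul]
      rw [_root_.abs_of_nonpos (by linarith : lam - 1 ≤ 0),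
        _root_.abs_of_nonneg (Real.rpow_nonneg hx0.le _)]
      apply le_of_eq
      ring
    refine hle.trans ?_
    have hfun : (fun x : ℝ => (1 - lam) * x ^ (lam - 2) * eps) =
        fun x : ℝ => ((1 - lam) * eps) * x ^ (lam - 2) := by
      funext x; ring
    rw [hfun, intervalIntegral.integral_const_mul]
    rcases eq_or_lt_of_le h1 with heq | hlt
    · rw [heq]
      simp [hε0.le]
    · have hne : lam - 2 ≠ -1 := by intro h; apply hlt.ne; linarith
      have hnm : (0:ℝ) ∉ [[eps, T]] := by
        rw [Set.uIcc_of_le hT, Set.mem_Icc]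
        rintro ⟨h01, -⟩
        linarith
      have e : lam - 2 + 1 = lam - 1 := by ring
      have hint : (∫ x in eps..T, x ^ (lam - 2)) =
          (T ^ (lam - 1) - eps ^ (lam - 1)) / (lam - 1) := by
        rw [integral_rpow (Or.inr ⟨hne, hnm⟩), e]
      rw [hint]
      have hval : (1 - lam) * eps * ((T ^ (lam - 1) - eps ^ (lam - 1)) / (lam - 1)) =
          eps * (eps ^ (lam - 1) - T ^ (lam - 1)) := by
        have : lam - 1 ≠ 0 := by intro h; apply hlt.ne; linarith
        field_simp
        ring
      rw [hval, _root_.abs_of_nonneg (by nlinarith [Real.rpow_nonneg hε0.le (lam-1)] :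
        (0:ℝ) ≤ eps * (eps ^ (lam - 1) - T ^ (lam - 1)))]
      calc eps * (eps ^ (lam - 1) - T ^ (lam - 1)) ≤ eps * eps ^ (lam - 1) := by
            nlinarith [Real.rpow_nonneg (lt_of_lt_of_le hε0 hT).le (lam-1)]
        _ = eps ^ lam := by rw [mul_comm, hepspow]
  calc ‖u T * v T - u eps * v eps - ∫ x in eps..T, u' x * v x‖
      ≤ ‖u T * v T - u eps * v eps‖ + ‖∫ x in eps..T, u' x * v x‖ := norm_sub_le _ _
    _ ≤ ‖u T * v T‖ + ‖u eps * v eps‖ + ‖∫ x in eps..T, u' x * v x‖ := by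
        have := norm_sub_le (u T * v T) (u eps * v eps)
        linarith
    _ ≤ eps ^ lam + eps ^ lam + eps ^ lam := by linarith
    _ = 3 * eps ^ lam := by ring


lemma key_bound (lam : ℝ) (h0 : 0 < lam) (h1 : lam ≤ 1) (s T : ℝ) (hs : s ≠ 0) (hT : 0 < T) :
    ‖∫ u in (0:ℝ)..T, Complex.exp (-(Complex.I * s) * u) * ((u ^ (lam - 1) : ℝ) : ℂ)‖ ≤
      (1 / lam + 3) * |s| ^ (-lam) := by
  set eps : ℝ := |s|⁻¹ with heps
  have hε0 : 0 < eps := by rw [heps]; positivity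
  have hpow : |s| ^ (-lam) = eps ^ lam := by
    rw [Real.rpow_neg (abs_nonneg s), heps, ← Real.inv_rpow (abs_nonneg s)]
  rw [hpow]
  rcases le_or_gt T eps with h | h
  · refine (near_bound lam h0 s T hT.le).trans ?_
    have hTle : T ^ lam ≤ eps ^ lam := Real.rpow_le_rpow hT.le h h0.le
    have hnn : 0 ≤ eps ^ lam := Real.rpow_nonneg hε0.le lam
    calc T ^ lam / lam ≤ eps ^ lam / lam := by gcongr
      _ = (1 / lam) * eps ^ lam := by ring
      _ ≤ (1 / lam + 3) * eps ^ lam := by nlinarith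
  · rw [← intervalIntegral.integral_add_adjacent_intervals
      (aux_ii_full lam h0 s 0 eps) (aux_ii_full lam h0 s eps T)]
    have hn := near_bound lam h0 s eps hε0.le
    have hfa := far_bound lam h0 h1 s eps T hs heps h.le
    calc ‖(∫ u in (0:ℝ)..eps, Complex.exp (-(Complex.I * s) * u) * ((u ^ (lam - 1) : ℝ) : ℂ)) +
          ∫ u in eps..T, Complex.exp (-(Complex.I * s) * u) * ((u ^ (lam - 1) : ℝ) : ℂ)‖
        ≤ ‖∫ u in (0:ℝ)..eps, Complex.exp (-(Complex.I * s) * u) * ((u ^ (lam - 1) : ℝ) : ℂ)‖ +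
          ‖∫ u in eps..T, Complex.exp (-(Complex.I * s) * u) * ((u ^ (lam - 1) : ℝ) : ℂ)‖ :=
          norm_add_le _ _
      _ ≤ eps ^ lam / lam + 3 * eps ^ lam := add_le_add hn hfa
      _ = (1 / lam + 3) * eps ^ lam := by ring

theorem stmt10 (lam : ℝ) (h0 : 0 < lam) (h1 : lam ≤ 1) :
    ∃ C > 0, ∀ (s a b : ℝ), s ≠ 0 → a < b →
      ‖∫ t in a..b, Complex.exp (-(Complex.I * s * t)) * (((t - a) ^ (lam - 1) : ℝ) : ℂ)‖ ≤
        C * |s| ^ (-lam) := by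
  refine ⟨1 / lam + 3, by positivity, ?_⟩
  intro s a b hs hab
  set f : ℝ → ℂ := fun u => Complex.exp (-(Complex.I * s) * ((u + a : ℝ) : ℂ)) *
    ((u ^ (lam - 1) : ℝ) : ℂ) with hf
  have step1 : (∫ t in a..b, Complex.exp (-(Complex.I * s * t)) * (((t - a) ^ (lam - 1) : ℝ) : ℂ))
      = ∫ t in a..b, f (t - a) := by
    apply intervalIntegral.integral_congr
    intro t _
    simp only [hf]
    rw [sub_add_cancel]
    congr 2
    push_cast
    ring
  have step2 : (∫ t in a..b, f (t - a)) = ∫ u in (0:ℝ)..(b - a), f u := by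
    rw [intervalIntegral.integral_comp_sub_right f a, sub_self]
  have step3 : (∫ u in (0:ℝ)..(b - a), f u) =
      Complex.exp (-(Complex.I * s) * a) *
        ∫ u in (0:ℝ)..(b - a), Complex.exp (-(Complex.I * s) * u) * ((u ^ (lam - 1) : ℝ) : ℂ) := by
    rw [← intervalIntegral.integral_const_mul]
    apply intervalIntegral.integral_congr
    intro u _
    simp only [hf]
    rw [← mul_assoc, ← Complex.exp_add]
    congr 2
    push_cast
    ring
  rw [step1, step2, step3, norm_mul, exp_norm_one, one_mul]
  exact key_bound lam h0 h1 s (b - a) hs (by linarith)
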